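/- Let A = (Q, Σ, δ, ρ) be a connected invertible reversible Mealy automaton that is not bireversible. Then every state of A induces an action of infinite order: for every x ∈ Q, the transformations ρ_x, ρ_x², ρ_x³, … of Σ* are pairwise distinct. -/
import Mathlib


/-!
Mealy automata: common definitions.

A Mealy automaton on stateset `Q` and alphabet `Γ` is given by transition
functions `δ : Γ → Q → Q` (for each input letter) and output functions
`ρ : Q → Γ → Γ` (for each state); it has a transition `x —i|j→ y` exactly
when `δ i x = y` and `ρ x i = j`.
-/

/-- Extended output function `ρ_x : Γ* → Γ*` of a single state. -/
def rhoStar {Q Γ : Type*} (δ : Γ → Q → Q) (ρ : Q → Γ → Γ) : Q → List Γ → List Γ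
  | _, [] => []
  | x, i :: s => ρ x i :: rhoStar δ ρ (δ i x) s

/-- `ρ_u : Γ* → Γ*` for a word `u = x₁⋯x_n` of states: `ρ_u = ρ_{x_n} ∘ ⋯ ∘ ρ_{x₁}`. -/
def rhoWord {Q Γ : Type*} (δ : Γ → Q → Q) (ρ : Q → Γ → Γ) : List Q → List Γ → List Γ
  | [], s => s
  | x :: u, s => rhoWord δ ρ u (rhoStar δ ρ x s)

/-- `ρ_u : Γ → Γ` on single letters (the output function of the power automaton). -/
def rhoLetter {Q Γ : Type*} (ρ : Q → Γ → Γ) : List Q → Γ → Γ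
  | [], i => i
  | x :: u, i => rhoLetter ρ u (ρ x i)

/-- Extended transition function `δ_i : Q* → Q*` (the transition function of powers). -/
def deltaStar {Q Γ : Type*} (δ : Γ → Q → Q) (ρ : Q → Γ → Γ) : Γ → List Q → List Q
  | _, [] => []
  | i, x :: u => δ i x :: deltaStar δ ρ (ρ x i) u

/-- Sequential application `δ_s = δ_{s_n} ∘ ⋯ ∘ δ_{s₁}` of the letters of a word `s`. -/
def applyWord {S Γ : Type*} (d : Γ → S → S) : List Γ → S → S
  | [], x => x
  | i :: s, x => applyWord d s (d i x)

/-- The orbit `{δ_s(x) : s ∈ Γ*}` of a state: for reversible automata this is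
exactly the (strongly) connected component of `x`. -/
def orbitOf {S Γ : Type*} (d : Γ → S → S) (x : S) : Set S :=
  {y | ∃ s : List Γ, applyWord d s x = y}

/-- An automaton is invertible when every output function is a permutation. -/
def MInvertible {Q Γ : Type*} (ρ : Q → Γ → Γ) : Prop := ∀ x, Function.Bijective (ρ x)

/-- An automaton is reversible when every transition function is a permutation. -/
def MReversible {Q Γ : Type*} (δ : Γ → Q → Q) : Prop := ∀ i, Function.Bijective (δ i)

/-- Coreversibility: `δ_i(y) = δ_{i'}(z)` and `ρ_y(i) = ρ_z(i')` imply `y = z`. -/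
def MCoreversible {Q Γ : Type*} (δ : Γ → Q → Q) (ρ : Q → Γ → Γ) : Prop :=
  ∀ y z : Q, ∀ i i' : Γ, δ i y = δ i' z → ρ y i = ρ z i' → y = z

/-- Bireversible: invertible, reversible and coreversible. -/
def MBireversible {Q Γ : Type*} (δ : Γ → Q → Q) (ρ : Q → Γ → Γ) : Prop :=
  MInvertible ρ ∧ MReversible δ ∧ MCoreversible δ ρ

/-- Connectedness: every state is reachable from every state. -/
def MConnected {Q Γ : Type*} (δ : Γ → Q → Q) : Prop :=
  ∀ x y : Q, ∃ s : List Γ, applyWord δ s x = y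

/-- Invertibility of a component `C` (as an automaton with stateset `C`). -/
def CompInvertible {S Γ : Type*} (r : S → Γ → Γ) (C : Set S) : Prop :=
  ∀ x ∈ C, Function.Bijective (r x)

/-- Reversibility of a component `C`: each transition function permutes `C`. -/
def CompReversible {S Γ : Type*} (d : Γ → S → S) (C : Set S) : Prop :=
  ∀ i : Γ, Set.BijOn (d i) C C

/-- Coreversibility of a component `C` (as an automaton with stateset `C`). -/
def CompCoreversible {S Γ : Type*} (d : Γ → S → S) (r : S → Γ → Γ) (C : Set S) : Prop :=
  ∀ y ∈ C, ∀ z ∈ C, ∀ i i' : Γ, d i y = d i' z → r y i = r z i' → y = z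

/-- Bireversibility of a component `C` (as an automaton with stateset `C`). -/
def CompBireversible {S Γ : Type*} (d : Γ → S → S) (r : S → Γ → Γ) (C : Set S) : Prop :=
  CompInvertible r C ∧ CompReversible d C ∧ CompCoreversible d r C

/-- Transition functions of the product `A × B` of two Mealy automata. -/
def prodD {Q Q' Γ : Type*} (δ : Γ → Q → Q) (ρ : Q → Γ → Γ) (δ' : Γ → Q' → Q') :
    Γ → Q × Q' → Q × Q' :=
  fun i p => (δ i p.1, δ' (ρ p.1 i) p.2)

/-- Output functions of the product `A × B` of two Mealy automata. -/
def prodR {Q Q' Γ : Type*} (ρ : Q → Γ → Γ) (ρ' : Q' → Γ → Γ) : Q × Q' → Γ → Γ :=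
  fun p i => ρ' p.2 (ρ p.1 i)

/-- `u^n`: the `n`-fold concatenation of a word with itself. -/
def wordPow {Q : Type*} (u : List Q) : ℕ → List Q
  | 0 => []
  | n + 1 => u ++ wordPow u n

section AuxLemmas
variable {Q Γ : Type*} (δ : Γ → Q → Q) (ρ : Q → Γ → Γ)

lemma rhoStar_len (x : Q) (s : List Γ) : (rhoStar δ ρ x s).length = s.length := by
  induction s generalizing x with
  | nil => rfl
  | cons i s ih => simp [rhoStar, ih]

lemma rhoStar_inj (hInv : MInvertible ρ) :
    ∀ (s t : List Γ) (x : Q), rhoStar δ ρ x s = rhoStar δ ρ x t → s = t := by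
  intro s
  induction s with
  | nil => intro t x h; cases t with
    | nil => rfl
    | cons j t => simp [rhoStar] at h
  | cons i s ih =>
    intro t x h
    cases t with
    | nil => simp [rhoStar] at h
    | cons j t =>
      simp only [rhoStar, List.cons.injEq] at h
      obtain ⟨h1, h2⟩ := h
      have hij : i = j := (hInv x).1 h1
      subst hij
      exact congrArg (i :: ·) (ih t (δ i x) h2)

lemma deltaStar_len (i : Γ) (u : List Q) : (deltaStar δ ρ i u).length = u.length := by
  induction u generalizing i with
  | nil => rfl
  | cons x u ih => simp [deltaStar, ih]

lemma deltaStar_inj (hRev : MReversible δ) :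
    ∀ (u v : List Q) (i : Γ), deltaStar δ ρ i u = deltaStar δ ρ i v → u = v := by
  intro u
  induction u with
  | nil => intro v i h; cases v with
    | nil => rfl
    | cons y v => simp [deltaStar] at h
  | cons x u ih =>
    intro v i h
    cases v with
    | nil => simp [deltaStar] at h
    | cons y v =>
      simp only [deltaStar, List.cons.injEq] at h
      obtain ⟨h1, h2⟩ := h
      have hxy : x = y := (hRev i).1 h1
      subst hxy
      exact congrArg (x :: ·) (ih v (ρ x i) h2)

lemma rhoWord_nil (u : List Q) : rhoWord δ ρ u ([] : List Γ) = [] := by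
  induction u with
  | nil => rfl
  | cons x u ih => simpa [rhoWord, rhoStar] using ih

lemma rhoWord_cons :
    ∀ (u : List Q) (i : Γ) (s : List Γ),
      rhoWord δ ρ u (i :: s) = rhoLetter ρ u i :: rhoWord δ ρ (deltaStar δ ρ i u) s := by
  intro u
  induction u with
  | nil => intro i s; rfl
  | cons x u ih =>
    intro i s
    show rhoWord δ ρ u (ρ x i :: rhoStar δ ρ (δ i x) s) = _
    rw [ih (ρ x i) (rhoStar δ ρ (δ i x) s)]
    rfl

lemma rhoWord_replicate (x : Q) (n : ℕ) (s : List Γ) :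
    rhoWord δ ρ (List.replicate n x) s = (rhoStar δ ρ x)^[n] s := by
  induction n generalizing s with
  | zero => rfl
  | succ n ih =>
    rw [List.replicate_succ]
    show rhoWord δ ρ (List.replicate n x) (rhoStar δ ρ x s) = _
    rw [ih, Function.iterate_succ_apply]

lemma applyWord_append {S A : Type*} (d : A → S → S) (s t : List A) (v : S) :
    applyWord d (s ++ t) v = applyWord d t (applyWord d s v) := by
  induction s generalizing v with
  | nil => rfl
  | cons i s ih => simp [applyWord, ih]

lemma head_applyWord :
    ∀ (s : List Γ) (x : Q) (t : List Q), ∃ t',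
      applyWord (deltaStar δ ρ) s (x :: t) = applyWord δ s x :: t' := by
  intro s
  induction s with
  | nil => intro x t; exact ⟨t, rfl⟩
  | cons i s ih =>
    intro x t
    obtain ⟨t', ht'⟩ := ih (δ i x) (deltaStar δ ρ (ρ x i) t)
    exact ⟨t', ht'⟩

lemma surj_of_inj_len {α : Type*} [Finite α] (f : List α → List α)
    (hlen : ∀ l, (f l).length = l.length) (hinj : Function.Injective f) :
    Function.Surjective f := by
  intro s
  have hfin := List.finite_length_eq α s.length
  have hmaps : Set.MapsTo f {l : List α | l.length = s.length}
      {l : List α | l.length = s.length} := fun l hl => by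
    simp only [Set.mem_setOf_eq] at *; rw [hlen, hl]
  have hbij := (hfin.injOn_iff_bijOn_of_mapsTo hmaps).mp hinj.injOn
  obtain ⟨t, _, ht⟩ := hbij.surjOn (show s ∈ {l : List α | l.length = s.length} from rfl)
  exact ⟨t, ht⟩

end AuxLemmas

/-- In a connected invertible reversible non-bireversible
Mealy automaton, every state induces an action of infinite order: the
positive powers of `ρ_x : Γ* → Γ*` are pairwise distinct. -/
theorem state_infinite_order_of_connected_nonbireversible
    {Q Γ : Type*} [Fintype Q] [Fintype Γ] [Nonempty Q] [Nonempty Γ]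
    (δ : Γ → Q → Q) (ρ : Q → Γ → Γ)
    (hConn : MConnected δ) (hInv : MInvertible ρ) (hRev : MReversible δ)
    (hNotBir : ¬ MBireversible δ ρ) :
    ∀ x : Q, ∀ p q : ℕ,
      (rhoStar δ ρ x)^[p + 1] = (rhoStar δ ρ x)^[q + 1] → p = q := by
  intro x p q hEq
  set g := rhoStar δ ρ x with hg
  -- key: no positive power of g is the identity
  have key : ∀ N, 0 < N → (∀ s, g^[N] s = s) → False := by
    intro N hN hid
    apply hNotBir
    refine ⟨hInv, hRev, ?_⟩
    -- notation
    set DS := deltaStar δ ρ with hDS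
    set u₀ := List.replicate N x with hu
    have hP0 : ∀ s, rhoWord δ ρ u₀ s = s := by
      intro s; rw [hu, rhoWord_replicate]; exact hid s
    -- single-step propagation of the identity-action property
    have hstep : ∀ v : List Q, (∀ s, rhoWord δ ρ v s = s) →
        ∀ i, rhoLetter ρ v i = i ∧ ∀ s, rhoWord δ ρ (DS i v) s = s := by
      intro v hv i
      have hcons : ∀ s : List Γ,
          rhoLetter ρ v i :: rhoWord δ ρ (DS i v) s = i :: s := by
        intro s
        rw [← rhoWord_cons]; exact hv (i :: s)
      constructor
      · have := hcons []
        exact (List.cons.injEq _ _ _ _ ▸ this).1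
      · intro s
        have := hcons s
        exact (List.cons.injEq _ _ _ _ ▸ this).2
    -- every element of the orbit acts as the identity
    have horb : ∀ (s : List Γ) (v : List Q), (∀ t, rhoWord δ ρ v t = t) →
        ∀ t, rhoWord δ ρ (applyWord DS s v) t = t := by
      intro s
      induction s with
      | nil => intro v hv t; exact hv t
      | cons i s ih =>
        intro v hv t
        exact ih (DS i v) (hstep v hv i).2 t
    set C := orbitOf DS u₀ with hC
    have hPC : ∀ v ∈ C, ∀ t, rhoWord δ ρ v t = t := by
      rintro v ⟨s, rfl⟩
      exact horb s u₀ hP0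
    -- lengths in the orbit
    have hlenAW : ∀ (s : List Γ) (v : List Q), (applyWord DS s v).length = v.length := by
      intro s
      induction s with
      | nil => intro v; rfl
      | cons i s ih => intro v; rw [show applyWord DS (i :: s) v = applyWord DS s (DS i v) from rfl,
          ih, hDS, deltaStar_len]
    have hLenC : ∀ v ∈ C, v.length = N := by
      rintro v ⟨s, rfl⟩
      rw [hlenAW, hu, List.length_replicate]
    -- C is finite, DS i maps C to C injectively, hence surjectively
    have hfinC : C.Finite := (List.finite_length_eq Q N).subset hLenC
    have hmaps : ∀ i : Γ, Set.MapsTo (DS i) C C := by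
      rintro i v ⟨s, rfl⟩
      exact ⟨s ++ [i], by rw [applyWord_append]; rfl⟩
    have hDSinj : ∀ i : Γ, Function.Injective (DS i) := by
      intro i u v h
      exact deltaStar_inj δ ρ hRev u v i h
    have hsurj : ∀ i : Γ, Set.SurjOn (DS i) C C := fun i =>
      ((hfinC.injOn_iff_bijOn_of_mapsTo (hmaps i)).mp (hDSinj i).injOn).surjOn
    -- prove coreversibility
    intro y z i i' h1 h2
    obtain ⟨sy, hsy⟩ := hConn x y
    obtain ⟨m, rfl⟩ : ∃ m, N = m + 1 := ⟨N - 1, by omega⟩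
    have hu' : u₀ = x :: List.replicate m x := by rw [hu, List.replicate_succ]
    obtain ⟨t, ht⟩ := head_applyWord δ ρ sy x (List.replicate m x)
    have hvC : (y :: t) ∈ C := by
      refine ⟨sy, ?_⟩
      rw [hu', ht, hsy]
    -- w := DS i (y :: t) lies in C; pull it back along DS i'
    have hwC : DS i (y :: t) ∈ C := hmaps i hvC
    obtain ⟨v', hv'C, hv'⟩ := hsurj i' hwC
    -- v' is nonempty
    have hv'len : v'.length = m + 1 := hLenC v' hv'C
    obtain ⟨z', t', rfl⟩ : ∃ a l, v' = a :: l := by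
      cases v' with
      | nil => simp at hv'len
      | cons a l => exact ⟨a, l, rfl⟩
    have hv'' : δ i' z' :: DS (ρ z' i') t' = δ i y :: DS (ρ y i) t := hv'
    have hz' : z' = z := by
      have hh : δ i' z' = δ i' z := by
        have := (List.cons.injEq _ _ _ _ ▸ hv'').1
        rw [this, h1]
      exact (hRev i').1 hh
    have htt : t' = t := by
      have hh : DS (ρ z i') t' = DS (ρ y i) t := by
        rw [← hz']
        exact (List.cons.injEq _ _ _ _ ▸ hv'').2
      rw [← h2] at hh
      exact deltaStar_inj δ ρ hRev t' t (ρ y i) hh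
    rw [hz', htt] at hv'C
    -- both y :: t and z :: t act as the identity on letters
    have hLy : ∀ k, rhoLetter ρ t (ρ y k) = k := by
      intro k
      have := (hstep (y :: t) (hPC _ hvC) k).1
      exact this
    have hLz : ∀ k, rhoLetter ρ t (ρ z k) = k := by
      intro k
      have := (hstep (z :: t) (hPC _ hv'C) k).1
      exact this
    -- rhoLetter ρ t is injective
    have hinj_t : Function.Injective (rhoLetter ρ t) := by
      intro a b hab
      obtain ⟨a', rfl⟩ := (hInv y).2 a
      obtain ⟨b', rfl⟩ := (hInv y).2 b
      have : a' = b' := by rw [← hLy a', ← hLy b', hab]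
      rw [this]
    have hii : i' = i := by
      have h3 : ρ y i' = ρ z i' := hinj_t (by rw [hLy i', hLz i'])
      have h4 : ρ y i' = ρ y i := by rw [h3, ← h2]
      exact (hInv y).1 h4
    subst hii
    exact (hRev _).1 h1
  -- surjectivity of g
  have hgsurj : Function.Surjective g :=
    surj_of_inj_len g (fun l => rhoStar_len δ ρ x l)
      (fun s t h => rhoStar_inj δ ρ hInv s t x h)
  -- conclude
  by_contra hpq
  have main : ∀ a b : ℕ, a < b → g^[a + 1] = g^[b + 1] → False := by
    intro a b hab h
    apply key (b - a) (by omega)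
    intro s
    obtain ⟨t, rfl⟩ := (hgsurj.iterate (a + 1)) s
    have : (b - a) + (a + 1) = b + 1 := by omega
    rw [← Function.iterate_add_apply, this, ← h]
  rcases Nat.lt_or_ge p q with h | h
  · exact main p q h hEq
  · exact main q p (lt_of_le_of_ne h (fun e => hpq e.symm)) hEq.symm
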